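/- arXiv:2311.06489 — 2 statements merged into one kernel-verified Lean document; each statement's English description precedes it below -/
import Mathlib

section
/- Let m ≥ 2 and let C be a linear code over ℤ/mℤ of length n, with dual code C^⊥, and let ρ : ℤ^n → (ℤ/mℤ)^n be componentwise reduction modulo m. Then the heat equation ∂_t u(x,t) = Δ_{ℤ^n} u(x,t) for (x,t) ∈ ℤ^n × ℝ_{≥0}, with initial condition u(x,0) = 1 if x ∈ ρ^{-1}(C) and u(x,0) = 0 otherwise, has a unique bounded solution u : ℤ^n × ℝ_{≥0} → ℝ which is differentiable in t ∈ ℝ_{>0} and continuous in t ∈ ℝ_{≥0}, and this solution is given explicitly by u(x,t) = e^{-t} (#C/m^n) Σ_{c=(c_1,…,c_n)∈C^⊥} ∏_{j=1}^n e^{(t/n) cos(2πc_j/m)} e^{2πi x_j c_j/m}. -/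
open scoped Real
open Complex
open scoped Classical

/-- `u` is a solution of the semidiscrete heat equation
`∂_t u = Δ_{ℤ^n} u` on `ℤ^n × ℝ_{≥0}` with initial condition `u0`,
where `Δ_{ℤ^n} f(x) = (1/2n) Σ_j (f(x+e_j)+f(x−e_j)−2f(x))`; we require `u` to be
continuous in `t ∈ ℝ_{≥0}` and differentiable in `t ∈ ℝ_{>0}`. -/
def IsHeatSolution (n : ℕ) (u0 : (Fin n → ℤ) → ℝ) (u : (Fin n → ℤ) → ℝ → ℝ) : Prop :=
  (∀ x, ContinuousOn (u x) (Set.Ici 0)) ∧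
  (∀ x t, 0 ≤ t → HasDerivWithinAt (u x)
      ((1 / (2 * (n : ℝ))) *
        ∑ j, (u (x + Pi.single j 1) t + u (x - Pi.single j 1) t - 2 * u x t))
      (Set.Ici 0) t) ∧
  (∀ x t, 0 < t → HasDerivAt (u x)
      ((1 / (2 * (n : ℝ))) *
        ∑ j, (u (x + Pi.single j 1) t + u (x - Pi.single j 1) t - 2 * u x t)) t) ∧
  (∀ x, u x 0 = u0 x)

/-- `u` is bounded on `ℤ^n × ℝ_{≥0}`. -/
def IsBoundedSol (n : ℕ) (u : (Fin n → ℤ) → ℝ → ℝ) : Prop :=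
  ∃ M : ℝ, ∀ x t, 0 ≤ t → |u x t| ≤ M

/-- The dual code `C^⊥ = {v : x·y = 0 for all y ∈ C}`. -/
def dualCode {m n : ℕ} (C : Submodule (ZMod m) (Fin n → ZMod m)) :
    Set (Fin n → ZMod m) :=
  {v | ∀ c ∈ C, ∑ i, v i * c i = 0}

namespace HeatCode

variable {m n : ℕ}

/-- The bilinear pairing on `(ZMod m)^n`. -/
def B (x y : Fin n → ZMod m) : ZMod m := ∑ i, x i * y i

lemma B_comm (x y : Fin n → ZMod m) : B x y = B y x := by
  unfold B; exact Finset.sum_congr rfl fun i _ => mul_comm _ _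

lemma B_add_left (x x' y : Fin n → ZMod m) : B (x + x') y = B x y + B x' y := by
  unfold B; rw [← Finset.sum_add_distrib]
  exact Finset.sum_congr rfl fun i _ => by simp [add_mul]

lemma B_smul_left (a : ZMod m) (x y : Fin n → ZMod m) : B (a • x) y = a * B x y := by
  unfold B; rw [Finset.mul_sum]
  exact Finset.sum_congr rfl fun i _ => by simp [mul_assoc]

section Char

variable (m) [NeZero m]

/-- primitive m-th root of unity -/
noncomputable def ζ : ℂ := Complex.exp (2 * Real.pi * I / m)

lemma ζ_prim : IsPrimitiveRoot (ζ m) m := by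
  have := Complex.isPrimitiveRoot_exp m (NeZero.ne m)
  simpa [ζ, mul_comm] using this

lemma ζ_pow : (ζ m) ^ m = 1 := (ζ_prim m).pow_eq_one

/-- the standard additive character of ZMod m -/
noncomputable def ec : AddChar (ZMod m) ℂ := AddChar.zmodChar m (ζ_pow m)

lemma ec_apply (a : ZMod m) : ec m a = Complex.exp (2 * Real.pi * I * a.val / m) := by
  rw [ec, AddChar.zmodChar_apply, ζ, ← Complex.exp_nat_mul]
  ring_nf

lemma ec_eq_one_iff (a : ZMod m) : ec m a = 1 ↔ a = 0 := by
  constructor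
  · intro h
    rw [ec, AddChar.zmodChar_apply] at h
    have := (ζ_prim m).pow_inj a.val_lt (NeZero.pos m) (by rw [h, pow_zero])
    exact (ZMod.val_eq_zero a).mp this
  · intro h; rw [h, ec, AddChar.map_zero_eq_one]

end Char


section Sums

variable (m n) [NeZero m]

/-- `B x ·` as an `AddMonoidHom`. -/
def Bhom (x : Fin n → ZMod m) : (Fin n → ZMod m) →+ ZMod m where
  toFun y := B x y
  map_zero' := by simp [B]
  map_add' y z := by
    show B x (y + z) = B x y + B x z
    rw [B_comm x (y+z), B_add_left, B_comm y x, B_comm z x]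

/-- character `y ↦ ec (B x y)` -/
noncomputable def χ (x : Fin n → ZMod m) : AddChar (Fin n → ZMod m) ℂ :=
  (ec m).compAddMonoidHom (Bhom m n x)

lemma χ_apply (x y : Fin n → ZMod m) : χ m n x y = ec m (B x y) := rfl

lemma B_single (x : Fin n → ZMod m) (j : Fin n) : B x (Pi.single j 1) = x j := by
  unfold B
  rw [Finset.sum_eq_single j]
  · simp
  · intro i _ hij; simp [Pi.single_eq_of_ne hij]
  · simp

lemma χ_eq_zero_iff (x : Fin n → ZMod m) : χ m n x = 0 ↔ x = 0 := by
  constructor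
  · intro h
    funext j
    have := AddChar.eq_zero_iff.mp h (Pi.single j 1)
    rw [χ_apply, B_single] at this
    simpa using (ec_eq_one_iff m (x j)).mp this
  · intro h
    rw [h]
    apply AddChar.eq_zero_iff.mpr
    intro y
    rw [χ_apply]
    have : B (0 : Fin n → ZMod m) y = 0 := by simp [B]
    rw [this]; exact (ec_eq_one_iff m 0).mpr rfl

lemma sum_full (x : Fin n → ZMod m) :
    ∑ y : Fin n → ZMod m, ec m (B x y) = if x = 0 then ((m : ℂ) ^ n) else 0 := by
  have h := AddChar.sum_eq_ite (χ m n x)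
  simp only [χ_apply] at h
  have hcard : ((Fintype.card (Fin n → ZMod m)) : ℂ) = (m:ℂ)^n := by
    rw [Fintype.card_pi]; simp [ZMod.card]
  by_cases hx : x = 0
  · rw [if_pos hx, h, if_pos ((χ_eq_zero_iff m n x).mpr hx), hcard]
  · rw [if_neg hx, h, if_neg (fun hz => hx ((χ_eq_zero_iff m n x).mp hz))]

/-- sum over a submodule -/
lemma sum_sub (M : Submodule (ZMod m) (Fin n → ZMod m)) (x : Fin n → ZMod m) :
    ∑ c : M, ec m (B x c) =
      if (∀ c ∈ M, B x c = 0) then (Fintype.card M : ℂ) else 0 := by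
  have h := AddChar.sum_eq_ite ((χ m n x).compAddMonoidHom M.subtype.toAddMonoidHom)
  simp only [AddChar.compAddMonoidHom_apply, χ_apply, LinearMap.toAddMonoidHom_coe,
    Submodule.subtype_apply] at h
  have hiff : (χ m n x).compAddMonoidHom M.subtype.toAddMonoidHom = 0 ↔ ∀ c ∈ M, B x c = 0 := by
    rw [AddChar.eq_zero_iff]
    constructor
    · intro hh c hc
      have := hh ⟨c, hc⟩
      simp only [AddChar.compAddMonoidHom_apply, χ_apply, LinearMap.toAddMonoidHom_coe,
        Submodule.subtype_apply] at this
      exact (ec_eq_one_iff m _).mp this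
    · intro hh c
      simp only [AddChar.compAddMonoidHom_apply, χ_apply, LinearMap.toAddMonoidHom_coe,
        Submodule.subtype_apply]
      exact (ec_eq_one_iff m _).mpr (hh c c.2)
  by_cases hx : ∀ c ∈ M, B x c = 0
  · rw [if_pos hx, h, if_pos (hiff.mpr hx)]
  · rw [if_neg hx, h, if_neg (fun hz => hx (hiff.mp hz))]

end Sums


section Perp

variable (m n) [NeZero m]

lemma B_zero_right (x : Fin n → ZMod m) : B x 0 = 0 := by simp [B]

lemma B_add_right (x y z : Fin n → ZMod m) : B x (y + z) = B x y + B x z := by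
  rw [B_comm x (y+z), B_add_left, B_comm y x, B_comm z x]

lemma B_smul_right (a : ZMod m) (x y : Fin n → ZMod m) : B x (a • y) = a * B x y := by
  rw [B_comm, B_smul_left, B_comm]

/-- the dual code, as a submodule -/
def perp (M : Submodule (ZMod m) (Fin n → ZMod m)) : Submodule (ZMod m) (Fin n → ZMod m) where
  carrier := {v | ∀ x ∈ M, B v x = 0}
  zero_mem' := by intro x _; rw [B_comm]; exact B_zero_right m n x
  add_mem' := by
    intro a b ha hb x hx
    rw [B_comm, B_add_right, B_comm x a, B_comm x b, ha x hx, hb x hx, add_zero]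
  smul_mem' := by
    intro c a ha x hx
    rw [B_comm, B_smul_right, B_comm x a, ha x hx, mul_zero]

lemma mem_perp {M : Submodule (ZMod m) (Fin n → ZMod m)} {v : Fin n → ZMod m} :
    v ∈ perp m n M ↔ ∀ x ∈ M, B v x = 0 := Iff.rfl

lemma card_mul_card_perp (M : Submodule (ZMod m) (Fin n → ZMod m)) :
    (Nat.card M) * (Nat.card (perp m n M)) = m ^ n := by
  have key : ∑ x : M, ∑ y : Fin n → ZMod m, ec m (B (x : Fin n → ZMod m) y)
      = ((m : ℂ)) ^ n := by
    have : ∀ x : M, ∑ y : Fin n → ZMod m, ec m (B (x : Fin n → ZMod m) y)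
        = if x = 0 then ((m : ℂ) ^ n) else 0 := by
      intro x
      rw [sum_full m n]
      congr 1
      simp [Submodule.coe_eq_zero]
    rw [Finset.sum_congr rfl (fun x _ => this x), Finset.sum_ite_eq' Finset.univ (0 : M)
      (fun _ => ((m:ℂ)^n))]
    simp
  rw [Finset.sum_comm] at key
  have inner : ∀ y : Fin n → ZMod m, ∑ x : M, ec m (B (x : Fin n → ZMod m) y)
      = if y ∈ perp m n M then (Fintype.card M : ℂ) else 0 := by
    intro y
    have : ∀ x : M, ec m (B (x : Fin n → ZMod m) y) = ec m (B y (x : Fin n → ZMod m)) := by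
      intro x; rw [B_comm]
    rw [Finset.sum_congr rfl (fun x _ => this x), sum_sub m n M y]
    congr 1
  rw [Finset.sum_congr rfl (fun y _ => inner y)] at key
  rw [← Finset.sum_filter, Finset.sum_const] at key
  have hfilter : (Finset.univ.filter (fun y => y ∈ perp m n M)).card
      = Nat.card (perp m n M) := by
    rw [Nat.card_eq_fintype_card, Fintype.card_subtype]
  rw [hfilter] at key
  have : ((Nat.card (perp m n M) * Fintype.card M : ℕ) : ℂ) = ((m:ℕ):ℂ) ^ n := by
    push_cast
    rw [← key, nsmul_eq_mul]
  have h2 : ((Nat.card (perp m n M) * Fintype.card M : ℕ) : ℂ) = ((m ^ n : ℕ) : ℂ) := by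
    rw [this]; push_cast; ring
  have h3 := Nat.cast_injective (R := ℂ) h2
  rw [Nat.card_eq_fintype_card (α := M), mul_comm]
  exact h3
lemma perp_antitone {M M' : Submodule (ZMod m) (Fin n → ZMod m)} (h : M ≤ M') :
    perp m n M' ≤ perp m n M := fun _ hv x hx => hv x (h hx)

lemma mem_of_forall_perp {M : Submodule (ZMod m) (Fin n → ZMod m)} {x : Fin n → ZMod m}
    (hx : ∀ c ∈ perp m n M, B x c = 0) : x ∈ M := by
  set M' := M ⊔ Submodule.span (ZMod m) {x} with hM'
  have hle : M ≤ M' := le_sup_left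
  have hperp : perp m n M' = perp m n M := by
    apply le_antisymm (perp_antitone m n hle)
    intro v hv w hw
    rcases Submodule.mem_sup.mp hw with ⟨a, ha, b, hb, rfl⟩
    rcases Submodule.mem_span_singleton.mp hb with ⟨r, rfl⟩
    have hvx : B v x = 0 := by rw [B_comm]; exact hx v hv
    rw [B_add_right, hv a ha, B_smul_right, hvx, mul_zero, add_zero]
  have c1 := card_mul_card_perp m n M
  have c2 := card_mul_card_perp m n M'
  rw [hperp] at c2
  have hpos : 0 < Nat.card (perp m n M) := Nat.card_pos
  have hcards : Nat.card M' = Nat.card M := by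
    have := c2.trans c1.symm
    exact Nat.eq_of_mul_eq_mul_right hpos this
  have hsets : (M : Set (Fin n → ZMod m)) = (M' : Set (Fin n → ZMod m)) := by
    apply Set.eq_of_subset_of_ncard_le hle
    rw [Set.ncard_eq_toFinset_card', Set.ncard_eq_toFinset_card']
    rw [Set.toFinset_card, Set.toFinset_card]
    have e1 : Fintype.card (M : Set (Fin n → ZMod m)) = Nat.card M := by
      rw [Nat.card_eq_fintype_card]; exact Fintype.card_congr (Equiv.refl _)
    have e2 : Fintype.card (M' : Set (Fin n → ZMod m)) = Nat.card M' := by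
      rw [Nat.card_eq_fintype_card]; exact Fintype.card_congr (Equiv.refl _)
    rw [e1, e2, hcards]
  have : M = M' := SetLike.coe_set_eq.mp hsets
  rw [this]
  exact Submodule.mem_sup_right (Submodule.mem_span_singleton_self x)

lemma sum_perp (C : Submodule (ZMod m) (Fin n → ZMod m)) (x : Fin n → ZMod m) :
    ∑ c : perp m n C, ec m (B x (c : Fin n → ZMod m)) =
      if x ∈ C then ((Nat.card (perp m n C) : ℂ)) else 0 := by
  rw [sum_sub m n (perp m n C) x]
  have hiff : (∀ c ∈ perp m n C, B x c = 0) ↔ x ∈ C := by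
    constructor
    · exact mem_of_forall_perp m n
    · intro hxC c hc
      rw [B_comm]; exact hc x hxC
  by_cases hx : x ∈ C
  · rw [if_pos (hiff.mpr hx), if_pos hx, Nat.card_eq_fintype_card]
  · rw [if_neg (fun h => hx (hiff.mp h)), if_neg hx]

end Perp


section Analytic

variable (m n : ℕ) [NeZero m]

/-- `e^{2πik/m}` for `k : ℤ`. -/
noncomputable def eZ (k : ℤ) : ℂ := Complex.exp (((2 * Real.pi * k / m : ℝ) : ℂ) * I)

lemma eZ_add (k l : ℤ) : eZ m (k + l) = eZ m k * eZ m l := by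
  rw [eZ, eZ, eZ, ← Complex.exp_add]
  congr 1
  push_cast
  ring

lemma eZ_zero : eZ m 0 = 1 := by
  rw [eZ]; norm_num

lemma eZ_abs (k : ℤ) : ‖eZ m k‖ = 1 := Complex.norm_exp_ofReal_mul_I _

lemma eZ_mul_m (j : ℤ) : eZ m ((m : ℤ) * j) = 1 := by
  have hm : (m : ℝ) ≠ 0 := Nat.cast_ne_zero.mpr (NeZero.ne m)
  have h : (2 * Real.pi * ((m : ℤ) * j : ℤ) / m : ℝ) = (j : ℝ) * (2 * Real.pi) := by
    push_cast
    field_simp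
  rw [eZ, h]
  have h2 : (((j : ℝ) * (2 * Real.pi) : ℝ) : ℂ) * I = (j : ℂ) * (2 * Real.pi * I) := by
    push_cast
    ring
  rw [h2, Complex.exp_int_mul_two_pi_mul_I]

lemma eZ_congr {k l : ℤ} (h : (m : ℤ) ∣ k - l) : eZ m k = eZ m l := by
  obtain ⟨j, hj⟩ := h
  have : k = l + (m : ℤ) * j := by omega
  rw [this, eZ_add, eZ_mul_m, mul_one]

lemma eZ_intCast (k : ℤ) : eZ m k = ec m ((k : ZMod m)) := by
  have h1 : ec m ((k : ZMod m)) = eZ m (((k : ZMod m)).val : ℤ) := by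
    rw [ec_apply, eZ]
    congr 1
    push_cast
    ring
  rw [h1]
  apply eZ_congr
  have : ((k : ZMod m) : ZMod m) = (((((k : ZMod m)).val : ℤ)) : ZMod m) := by
    push_cast
    rw [ZMod.natCast_val, ZMod.cast_id]
  exact (ZMod.intCast_eq_intCast_iff _ _ _).mp (by push_cast at this ⊢; rw [← this]) |>.dvd

lemma ec_sum {ι : Type*} (s : Finset ι) (f : ι → ZMod m) :
    ec m (∑ j ∈ s, f j) = ∏ j ∈ s, ec m (f j) := by
  classical
  induction s using Finset.cons_induction with
  | empty => simp [AddChar.map_zero_eq_one]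
  | cons a s ha ih => rw [Finset.sum_cons, Finset.prod_cons, AddChar.map_add_eq_mul, ih]

lemma eZ_conj (k : ℤ) : (starRingEnd ℂ) (eZ m k) = eZ m (-k) := by
  rw [eZ, eZ, ← Complex.exp_conj]
  congr 1
  rw [map_mul, Complex.conj_ofReal, Complex.conj_I]
  push_cast
  ring

lemma eZ_add_eZ_neg (k : ℤ) :
    eZ m k + eZ m (-k) = ((2 * Real.cos (2 * Real.pi * k / m) : ℝ) : ℂ) := by
  rw [eZ, eZ, Complex.exp_mul_I, Complex.exp_mul_I]
  have : ((2 * Real.pi * (-k : ℤ) / m : ℝ) : ℂ) = -((2 * Real.pi * k / m : ℝ) : ℂ) := by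
    push_cast; ring
  rw [this, Complex.cos_neg, Complex.sin_neg]
  rw [← Complex.ofReal_cos]
  push_cast
  ring

end Analytic


section Sol

variable (m n : ℕ) [NeZero m]

/-- eigenvalue part -/
noncomputable def μ (c : Fin n → ZMod m) : ℝ :=
  (∑ j, Real.cos (2 * Real.pi * ((c j).val : ℝ) / m)) / n

/-- character part -/
noncomputable def ψ (c : Fin n → ZMod m) (x : Fin n → ℤ) : ℂ :=
  ∏ j, eZ m (x j * ((c j).val : ℤ))

/-- a single mode of the solution -/
noncomputable def Term (c : Fin n → ZMod m) (x : Fin n → ℤ) (t : ℝ) : ℂ :=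
  Complex.exp ((t : ℂ) * (((μ m n c : ℝ) : ℂ) - 1)) * ψ m n c x

lemma μ_le_one (hn : 0 < n) (c : Fin n → ZMod m) : μ m n c ≤ 1 := by
  rw [μ, div_le_one (by positivity)]
  calc ∑ j, Real.cos (2 * Real.pi * ((c j).val : ℝ) / m)
      ≤ ∑ _j : Fin n, 1 := Finset.sum_le_sum fun j _ => Real.cos_le_one _
    _ = n := by simp

lemma ψ_abs (c : Fin n → ZMod m) (x : Fin n → ℤ) : ‖ψ m n c x‖ = 1 := by
  rw [ψ, norm_prod]
  exact Finset.prod_eq_one fun j _ => eZ_abs m _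

lemma Term_abs (hn : 0 < n) (c : Fin n → ZMod m) (x : Fin n → ℤ) {t : ℝ} (ht : 0 ≤ t) :
    ‖Term m n c x t‖ ≤ 1 := by
  rw [Term, norm_mul, ψ_abs, mul_one]
  have : ((t : ℂ) * (((μ m n c : ℝ) : ℂ) - 1)).re = t * (μ m n c - 1) := by
    simp [Complex.mul_re]
  rw [Complex.norm_exp, this]
  have : t * (μ m n c - 1) ≤ 0 :=
    mul_nonpos_of_nonneg_of_nonpos ht (by linarith [μ_le_one m n hn c])
  exact Real.exp_le_one_iff.mpr this

lemma ψ_shift (c : Fin n → ZMod m) (x : Fin n → ℤ) (j : Fin n) (a : ℤ) :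
    ψ m n c (x + Pi.single j a) = ψ m n c x * eZ m (a * ((c j).val : ℤ)) := by
  rw [ψ, ψ]
  have h : ∀ j' : Fin n, eZ m (((x + Pi.single j a : Fin n → ℤ)) j' * ((c j').val : ℤ)) =
      eZ m (x j' * ((c j').val : ℤ)) * eZ m ((Pi.single j a : Fin n → ℤ) j' * ((c j').val : ℤ)) := by
    intro j'
    rw [← eZ_add]
    congr 1
    simp [add_mul]
  rw [Finset.prod_congr rfl (fun j' _ => h j'), Finset.prod_mul_distrib]
  congr 1
  rw [Finset.prod_eq_single j]
  · simp
  · intro i _ hij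
    rw [Pi.single_eq_of_ne hij, zero_mul, eZ_zero]
  · simp

lemma Term_shift (c : Fin n → ZMod m) (x : Fin n → ℤ) (t : ℝ) (j : Fin n) (a : ℤ) :
    Term m n c (x + Pi.single j a) t = Term m n c x t * eZ m (a * ((c j).val : ℤ)) := by
  rw [Term, Term, ψ_shift, mul_assoc]

/-- Key identity: the discrete Laplacian applied to a single mode. -/
lemma Term_laplace (hn : 0 < n) (c : Fin n → ZMod m) (x : Fin n → ℤ) (t : ℝ) :
    ∑ j, (Term m n c (x + Pi.single j 1) t + Term m n c (x - Pi.single j 1) t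
        - 2 * Term m n c x t)
      = Term m n c x t * (2 * n * (((μ m n c : ℝ) : ℂ) - 1)) := by
  have hsub : ∀ j : Fin n, x - Pi.single j 1 = x + Pi.single j (-1 : ℤ) := by
    intro j
    rw [sub_eq_add_neg, ← Pi.single_neg]
  have h : ∀ j : Fin n,
      Term m n c (x + Pi.single j 1) t + Term m n c (x - Pi.single j 1) t
        - 2 * Term m n c x t
      = Term m n c x t *
          (((2 * Real.cos (2 * Real.pi * ((c j).val : ℝ) / m) : ℝ) : ℂ) - 2) := by
    intro j
    rw [hsub j, Term_shift, Term_shift, one_mul, neg_one_mul]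
    rw [← mul_add, eZ_add_eZ_neg]
    push_cast
    ring
  rw [Finset.sum_congr rfl (fun j _ => h j), ← Finset.mul_sum]
  congr 1
  have hμ : (∑ j, Real.cos (2 * Real.pi * ((c j).val : ℝ) / m)) = n * μ m n c := by
    rw [μ, mul_div_cancel₀]
    exact Nat.cast_ne_zero.mpr hn.ne'
  have h1 : ∑ j, ((2 * Real.cos (2 * Real.pi * ((c j).val : ℝ) / m) : ℝ) : ℂ)
      = ((2 * ((n : ℝ) * μ m n c) : ℝ) : ℂ) := by
    rw [← Complex.ofReal_sum]
    congr 1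
    rw [← Finset.mul_sum, hμ]
  rw [Finset.sum_sub_distrib, h1, Finset.sum_const, Finset.card_univ, Fintype.card_fin]
  push_cast
  ring

end Sol


section Sol2

variable (m n : ℕ) [NeZero m]

lemma Term_hasDerivAt (c : Fin n → ZMod m) (x : Fin n → ℤ) (t : ℝ) :
    HasDerivAt (fun t => Term m n c x t)
      (((((μ m n c : ℝ) : ℂ)) - 1) * Term m n c x t) t := by
  have h1 : HasDerivAt (fun t : ℝ => (t : ℂ)) 1 t := by
    simpa using (hasDerivAt_id t).ofReal_comp
  have h2 := (h1.mul_const ((((μ m n c : ℝ) : ℂ)) - 1)).cexp.mul_const (ψ m n c x)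
  exact h2.congr_deriv (by rw [Term]; ring)

variable (C : Submodule (ZMod m) (Fin n → ZMod m))

/-- the candidate solution (complex-valued form) -/
noncomputable def U (x : Fin n → ℤ) (t : ℝ) : ℂ :=
  ((Nat.card C : ℂ) / (m : ℂ) ^ n) *
    ∑ c : perp m n C, Term m n (c : Fin n → ZMod m) x t

lemma U_hasDerivAt (hn : 0 < n) (x : Fin n → ℤ) (t : ℝ) :
    HasDerivAt (fun t => U m n C x t)
      ((((1 / (2 * (n : ℝ))) : ℝ) : ℂ) *
        ∑ j, (U m n C (x + Pi.single j 1) t + U m n C (x - Pi.single j 1) t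
          - 2 * U m n C x t)) t := by
  have hd : HasDerivAt (fun t => ∑ c : perp m n C, Term m n (c : Fin n → ZMod m) x t)
      (∑ c : perp m n C, (((μ m n (c : Fin n → ZMod m) : ℝ) : ℂ) - 1) *
        Term m n (c : Fin n → ZMod m) x t) t :=
    HasDerivAt.fun_sum fun c _ => Term_hasDerivAt m n _ x t
  have hd2 := hd.const_mul ((Nat.card C : ℂ) / (m : ℂ) ^ n)
  have hn' : ((n : ℝ) : ℂ) ≠ 0 := by
    simp only [ne_eq, Complex.ofReal_natCast, Nat.cast_eq_zero]
    omega
  have key : ∀ c : perp m n C,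
      (((1 / (2 * (n : ℝ))) : ℝ) : ℂ) *
        ∑ j, (Term m n (c : Fin n → ZMod m) (x + Pi.single j 1) t
          + Term m n (c : Fin n → ZMod m) (x - Pi.single j 1) t
          - 2 * Term m n (c : Fin n → ZMod m) x t)
      = (((μ m n (c : Fin n → ZMod m) : ℝ) : ℂ) - 1) *
          Term m n (c : Fin n → ZMod m) x t := by
    intro c
    rw [Term_laplace m n hn]
    have h2n : (2 * (n : ℂ)) ≠ 0 := by
      simp only [ne_eq, mul_eq_zero, OfNat.ofNat_ne_zero, Nat.cast_eq_zero, false_or]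
      omega
    rw [show (((1 / (2 * (n : ℝ))) : ℝ) : ℂ) = (2 * (n : ℂ))⁻¹ by push_cast; ring]
    rw [inv_mul_eq_iff_eq_mul₀ h2n]
    push_cast
    ring
  have per_j : ∀ j : Fin n,
      U m n C (x + Pi.single j 1) t + U m n C (x - Pi.single j 1) t - 2 * U m n C x t
      = ((Nat.card C : ℂ) / (m : ℂ) ^ n) *
          ∑ c : perp m n C, (Term m n (c : Fin n → ZMod m) (x + Pi.single j 1) t
            + Term m n (c : Fin n → ZMod m) (x - Pi.single j 1) t
            - 2 * Term m n (c : Fin n → ZMod m) x t) := by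
    intro j
    simp only [U]
    rw [Finset.sum_sub_distrib, Finset.sum_add_distrib, ← Finset.mul_sum]
    ring
  have final : ((Nat.card C : ℂ) / (m : ℂ) ^ n) *
      (∑ c : perp m n C, (((μ m n (c : Fin n → ZMod m) : ℝ) : ℂ) - 1) *
        Term m n (c : Fin n → ZMod m) x t)
      = (((1 / (2 * (n : ℝ))) : ℝ) : ℂ) *
        ∑ j, (U m n C (x + Pi.single j 1) t + U m n C (x - Pi.single j 1) t
          - 2 * U m n C x t) := by
    rw [Finset.sum_congr rfl fun c _ => (key c).symm]
    rw [← Finset.mul_sum, Finset.sum_comm]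
    rw [Finset.sum_congr rfl fun j _ => per_j j]
    rw [← Finset.mul_sum]
    ring
  exact final ▸ hd2

end Sol2


section Sol3

variable (m n : ℕ) [NeZero m]

lemma ψ_eq_ec (c : Fin n → ZMod m) (x : Fin n → ℤ) :
    ψ m n c x = ec m (B (fun i => ((x i : ZMod m))) c) := by
  rw [ψ, B, ec_sum]
  apply Finset.prod_congr rfl
  intro j _
  rw [eZ_intCast]
  congr 1
  push_cast
  rw [ZMod.natCast_val, ZMod.cast_id]

variable (C : Submodule (ZMod m) (Fin n → ZMod m))

lemma U_zero (x : Fin n → ℤ) :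
    U m n C x 0 = if (fun i => ((x i : ZMod m))) ∈ C then 1 else 0 := by
  rw [U]
  have hterm : ∀ c : perp m n C, Term m n (c : Fin n → ZMod m) x 0
      = ec m (B (fun i => ((x i : ZMod m))) (c : Fin n → ZMod m)) := by
    intro c
    rw [Term, ← ψ_eq_ec]
    simp
  have hB : ∀ c : perp m n C, ec m (B (fun i => ((x i : ZMod m))) (c : Fin n → ZMod m))
      = ec m (B (fun i => ((x i : ZMod m))) ((c : Fin n → ZMod m))) := fun _ => rfl
  rw [Finset.sum_congr rfl fun c _ => hterm c, sum_perp]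
  by_cases h : (fun i => ((x i : ZMod m))) ∈ C
  · rw [if_pos h, if_pos h]
    have hcount := card_mul_card_perp m n C
    have hm : ((m : ℂ)) ^ n ≠ 0 := by
      apply pow_ne_zero
      simp only [ne_eq, Nat.cast_eq_zero]
      exact NeZero.ne m
    rw [div_mul_eq_mul_div, div_eq_one_iff_eq hm]
    norm_cast
  · rw [if_neg h, if_neg h, mul_zero]

lemma val_neg_cos (a : ZMod m) :
    Real.cos (2 * Real.pi * (((-a).val : ℕ) : ℝ) / m)
      = Real.cos (2 * Real.pi * ((a.val : ℕ) : ℝ) / m) := by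
  rw [ZMod.neg_val]
  by_cases h : a = 0
  · rw [if_pos h, h]
    simp [ZMod.val_zero]
  · rw [if_neg h]
    have hle : a.val ≤ m := le_of_lt a.val_lt
    have hm : (m : ℝ) ≠ 0 := Nat.cast_ne_zero.mpr (NeZero.ne m)
    have : 2 * Real.pi * (((m - a.val : ℕ)) : ℝ) / m
        = 2 * Real.pi - 2 * Real.pi * ((a.val : ℕ) : ℝ) / m := by
      rw [Nat.cast_sub hle]
      field_simp
    rw [this, Real.cos_two_pi_sub]

lemma μ_neg (c : Fin n → ZMod m) : μ m n (-c) = μ m n c := by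
  rw [μ, μ]
  congr 1
  apply Finset.sum_congr rfl
  intro j _
  exact val_neg_cos m (c j)

lemma ψ_conj (c : Fin n → ZMod m) (x : Fin n → ℤ) :
    (starRingEnd ℂ) (ψ m n c x) = ψ m n (-c) x := by
  rw [ψ, ψ, map_prod]
  apply Finset.prod_congr rfl
  intro j _
  rw [eZ_conj]
  apply eZ_congr
  have hle : (c j).val ≤ m := le_of_lt (c j).val_lt
  by_cases h : c j = 0
  · have h2 : (-c) j = 0 := by rw [Pi.neg_apply, h, neg_zero]
    rw [h, h2]
    simp
  · have h2 : ((-c) j).val = m - (c j).val := by rw [Pi.neg_apply, ZMod.neg_val, if_neg h]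
    refine ⟨-(x j), ?_⟩
    rw [h2]
    push_cast [Nat.cast_sub hle]
    ring

lemma Term_conj (c : Fin n → ZMod m) (x : Fin n → ℤ) (t : ℝ) :
    (starRingEnd ℂ) (Term m n c x t) = Term m n (-c) x t := by
  rw [Term, Term, map_mul, ψ_conj, ← Complex.exp_conj]
  congr 2
  rw [map_mul, map_sub, Complex.conj_ofReal, Complex.conj_ofReal, map_one, μ_neg]

lemma U_conj (x : Fin n → ℤ) (t : ℝ) :
    (starRingEnd ℂ) (U m n C x t) = U m n C x t := by
  rw [U, map_mul, map_sum]
  congr 1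
  · rw [map_div₀, map_pow]
    simp [Complex.conj_natCast]
  · rw [show (∑ c : perp m n C, (starRingEnd ℂ) (Term m n (c : Fin n → ZMod m) x t))
        = ∑ c : perp m n C, Term m n (-(c : Fin n → ZMod m)) x t from
      Finset.sum_congr rfl fun c _ => Term_conj m n (c : Fin n → ZMod m) x t]
    refine Fintype.sum_equiv (Equiv.neg _) _ _ fun c => ?_
    simp

lemma U_re (x : Fin n → ℤ) (t : ℝ) : (((U m n C x t).re : ℝ) : ℂ) = U m n C x t :=
  Complex.conj_eq_iff_re.mp (U_conj m n C x t)

lemma U_abs_le (hn : 0 < n) (x : Fin n → ℤ) {t : ℝ} (ht : 0 ≤ t) :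
    ‖U m n C x t‖
      ≤ ‖(Nat.card C : ℂ) / (m : ℂ) ^ n‖ * Fintype.card (perp m n C) := by
  rw [U, norm_mul]
  apply mul_le_mul_of_nonneg_left _ (norm_nonneg _)
  calc ‖∑ c : perp m n C, Term m n (c : Fin n → ZMod m) x t‖
      ≤ ∑ c : perp m n C, ‖Term m n (c : Fin n → ZMod m) x t‖ :=
        norm_sum_le _ _
    _ ≤ ∑ _c : perp m n C, 1 :=
        Finset.sum_le_sum fun c _ => Term_abs m n hn _ x ht
    _ = Fintype.card (perp m n C) := by simp

end Sol3


section Unique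

lemma uniqueness_aux (n : ℕ) (hn : 0 < n) (w : (Fin n → ℤ) → ℝ → ℝ) (M₀ : ℝ)
    (hM : ∀ x t, 0 ≤ t → |w x t| ≤ M₀)
    (hcont : ∀ x, ContinuousOn (w x) (Set.Ici 0))
    (hderiv : ∀ x t, 0 ≤ t → HasDerivWithinAt (w x)
        ((1 / (2 * (n : ℝ))) *
          ∑ j, (w (x + Pi.single j 1) t + w (x - Pi.single j 1) t - 2 * w x t))
        (Set.Ici 0) t)
    (hzero : ∀ x, w x 0 = 0) :
    ∀ x t, 0 ≤ t → w x t = 0 := by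
  set δ : (Fin n → ℤ) → ℝ → ℝ := fun x s =>
    (1 / (2 * (n : ℝ))) *
      ∑ j, (w (x + Pi.single j 1) s + w (x - Pi.single j 1) s - 2 * w x s) with hδ
  have hδcont : ∀ x, ContinuousOn (δ x) (Set.Ici 0) := by
    intro x
    apply ContinuousOn.mul continuousOn_const
    apply continuousOn_finset_sum
    intro j _
    exact ((hcont _).add (hcont _)).sub (continuousOn_const.mul (hcont x))
  have hFTC : ∀ x, ∀ t : ℝ, 0 ≤ t → w x t = ∫ s in (0)..t, δ x s := by
    intro x t ht
    have h := intervalIntegral.integral_eq_sub_of_hasDeriv_right_of_le ht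
      ((hcont x).mono Set.Icc_subset_Ici_self)
      (fun s hs => (hderiv x s hs.1.le).mono (fun y (hy : s < y) => hs.1.le.trans hy.le))
      (((hδcont x).mono (by rw [Set.uIcc_of_le ht]; exact Set.Icc_subset_Ici_self)).intervalIntegrable)
    rw [h, hzero x, sub_zero]
  have hind : ∀ k : ℕ, ∀ x, ∀ t : ℝ, 0 ≤ t →
      |w x t| ≤ M₀ * (2 * t) ^ k / (Nat.factorial k) := by
    intro k
    induction k with
    | zero =>
      intro x t ht
      simpa using hM x t ht
    | succ k ih =>
      intro x t ht
      have hptwise : ∀ s ∈ Set.Icc (0:ℝ) t,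
          |δ x s| ≤ (M₀ * 2 ^ (k+1) / (Nat.factorial k)) * s ^ k := by
        intro s hs
        have hs0 : (0:ℝ) ≤ s := hs.1
        have hb : ∀ y : Fin n → ℤ, |w y s| ≤ M₀ * (2 * s) ^ k / (Nat.factorial k) :=
          fun y => ih y s hs0
        set Bk := M₀ * (2 * s) ^ k / (Nat.factorial k) with hBk
        have habs : |∑ j, (w (x + Pi.single j 1) s + w (x - Pi.single j 1) s - 2 * w x s)|
            ≤ ∑ _j : Fin n, 4 * Bk := by
          refine (Finset.abs_sum_le_sum_abs _ _).trans (Finset.sum_le_sum fun j _ => ?_)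
          have h1 := hb (x + Pi.single j 1)
          have h2 := hb (x - Pi.single j 1)
          have h3 := hb x
          have := abs_sub (w (x + Pi.single j 1) s + w (x - Pi.single j 1) s) (2 * w x s)
          calc |w (x + Pi.single j 1) s + w (x - Pi.single j 1) s - 2 * w x s|
              ≤ |w (x + Pi.single j 1) s| + |w (x - Pi.single j 1) s| + |2 * w x s| := by
                calc _ ≤ |w (x + Pi.single j 1) s + w (x - Pi.single j 1) s| + |2 * w x s| :=
                      abs_sub _ _
                  _ ≤ _ := by
                      have := abs_add_le (w (x + Pi.single j 1) s) (w (x - Pi.single j 1) s)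
                      linarith
            _ ≤ Bk + Bk + 2 * Bk := by
                rw [abs_mul]
                have : |(2:ℝ)| = 2 := by norm_num
                rw [this]
                linarith
            _ = 4 * Bk := by ring
        have hn' : (0:ℝ) < (n:ℝ) := Nat.cast_pos.mpr hn
        calc |δ x s| = (1 / (2 * (n:ℝ))) *
              |∑ j, (w (x + Pi.single j 1) s + w (x - Pi.single j 1) s - 2 * w x s)| := by
              rw [hδ, abs_mul]
              congr 1
              rw [abs_of_pos]
              positivity
          _ ≤ (1 / (2 * (n:ℝ))) * (∑ _j : Fin n, 4 * Bk) := by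
              apply mul_le_mul_of_nonneg_left habs
              positivity
          _ = 2 * Bk := by
              rw [Finset.sum_const, Finset.card_univ, Fintype.card_fin, nsmul_eq_mul]
              field_simp
              ring
          _ = (M₀ * 2 ^ (k+1) / (Nat.factorial k)) * s ^ k := by
              rw [hBk]
              rw [mul_pow]
              ring
      have hint1 : IntervalIntegrable (fun s => |δ x s|) MeasureTheory.volume 0 t :=
        (((hδcont x).mono (by rw [Set.uIcc_of_le ht]; exact Set.Icc_subset_Ici_self)).abs).intervalIntegrable
      have hint2 : IntervalIntegrable
          (fun s => (M₀ * 2 ^ (k+1) / (Nat.factorial k)) * s ^ k) MeasureTheory.volume 0 t :=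
        (continuous_const.mul (continuous_pow k)).intervalIntegrable 0 t
      calc |w x t| = |∫ s in (0)..t, δ x s| := by rw [hFTC x t ht]
        _ ≤ ∫ s in (0)..t, |δ x s| := intervalIntegral.abs_integral_le_integral_abs ht
        _ ≤ ∫ s in (0)..t, (M₀ * 2 ^ (k+1) / (Nat.factorial k)) * s ^ k := by
            apply intervalIntegral.integral_mono_on ht hint1 hint2 hptwise
        _ = (M₀ * 2 ^ (k+1) / (Nat.factorial k)) * (t ^ (k+1) / (k+1)) := by
            rw [intervalIntegral.integral_const_mul, integral_pow]
            norm_num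
        _ = M₀ * (2 * t) ^ (k+1) / (Nat.factorial (k+1)) := by
            rw [Nat.factorial_succ, mul_pow]
            push_cast
            field_simp
  intro x t ht
  have htend : Filter.Tendsto (fun k : ℕ => M₀ * (2 * t) ^ k / (Nat.factorial k))
      Filter.atTop (nhds 0) := by
    have h := FloorSemiring.tendsto_pow_div_factorial_atTop (K := ℝ) (2 * t)
    have h2 := h.const_mul M₀
    rw [mul_zero] at h2
    convert h2 using 2 with k
    ring
  have hle : |w x t| ≤ 0 := ge_of_tendsto' htend (fun k => hind k x t ht)
  have := abs_nonneg (w x t)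
  have : |w x t| = 0 := le_antisymm hle this
  exact abs_eq_zero.mp this

end Unique

section Formula

variable (m n : ℕ) [NeZero m]

lemma Term_formula (hn : 0 < n) (c : Fin n → ZMod m) (x : Fin n → ℤ) (t : ℝ) :
    Complex.exp (-(t : ℂ)) *
      ∏ j, Complex.exp (((t / n : ℝ) : ℂ) *
          Real.cos (2 * Real.pi * (((c j).val : ℕ) : ℝ) / (m : ℝ))) *
        Complex.exp (2 * Real.pi * I * ((x j : ℤ) : ℝ) * (((c j).val : ℕ) : ℝ) / (m : ℝ))
    = Term m n c x t := by
  have hn' : ((n : ℝ)) ≠ 0 := Nat.cast_ne_zero.mpr hn.ne'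
  rw [Finset.prod_mul_distrib]
  have h2 : ∏ j, Complex.exp (2 * Real.pi * I * ((x j : ℤ) : ℝ) * (((c j).val : ℕ) : ℝ) / (m : ℝ))
      = ψ m n c x := by
    rw [ψ]
    apply Finset.prod_congr rfl
    intro j _
    rw [eZ]
    congr 1
    push_cast
    ring
  have h1 : ∏ j, Complex.exp (((t / n : ℝ) : ℂ) *
      Real.cos (2 * Real.pi * (((c j).val : ℕ) : ℝ) / (m : ℝ)))
      = Complex.exp (((t * μ m n c : ℝ) : ℂ)) := by
    rw [← Complex.exp_sum]
    congr 1
    have : ∀ j : Fin n, (((t / n : ℝ) : ℂ)) *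
        ((Real.cos (2 * Real.pi * (((c j).val : ℕ) : ℝ) / (m : ℝ)) : ℝ) : ℂ)
        = (((t / n * Real.cos (2 * Real.pi * (((c j).val : ℕ) : ℝ) / (m : ℝ)) : ℝ)) : ℂ) := by
      intro j
      push_cast
      ring
    rw [Finset.sum_congr rfl fun j _ => this j, ← Complex.ofReal_sum, ← Finset.mul_sum]
    congr 1
    rw [μ]
    field_simp
  rw [h2, h1, Term, ← mul_assoc, ← Complex.exp_add]
  congr 2
  push_cast
  ring

end Formula

section UEq

lemma U_eq_formula (m n : ℕ) [NeZero m] (hn : 0 < n)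
    (C : Submodule (ZMod m) (Fin n → ZMod m)) (x : Fin n → ℤ) (t : ℝ) :
    U m n C x t = Complex.exp (-(t : ℂ)) * ((Nat.card C : ℂ) / (m : ℂ) ^ n) *
      ∑' c : dualCode C,
        ∏ j, Complex.exp (((t / n : ℝ) : ℂ) *
            Real.cos (2 * Real.pi * (((c : Fin n → ZMod m) j).val : ℝ) / (m : ℝ))) *
          Complex.exp (2 * Real.pi * I * (x j : ℝ) *
            (((c : Fin n → ZMod m) j).val : ℝ) / (m : ℝ)) := by
  rw [tsum_fintype]
  have hsum : (∑ c : dualCode C,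
        ∏ j, Complex.exp (((t / n : ℝ) : ℂ) *
            Real.cos (2 * Real.pi * (((c : Fin n → ZMod m) j).val : ℝ) / (m : ℝ))) *
          Complex.exp (2 * Real.pi * I * (x j : ℝ) *
            (((c : Fin n → ZMod m) j).val : ℝ) / (m : ℝ)))
      = ∑ c : perp m n C,
        ∏ j, Complex.exp (((t / n : ℝ) : ℂ) *
            Real.cos (2 * Real.pi * (((c : Fin n → ZMod m) j).val : ℝ) / (m : ℝ))) *
          Complex.exp (2 * Real.pi * I * (x j : ℝ) *
            (((c : Fin n → ZMod m) j).val : ℝ) / (m : ℝ)) :=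
    Fintype.sum_equiv (Equiv.subtypeEquivRight fun v => Iff.rfl) _ _ fun c => rfl
  rw [hsum, U]
  rw [show (∑ c : perp m n C, Term m n ((c : Fin n → ZMod m)) x t)
      = ∑ c : perp m n C, Complex.exp (-(t : ℂ)) *
        ∏ j, Complex.exp (((t / n : ℝ) : ℂ) *
            Real.cos (2 * Real.pi * (((c : Fin n → ZMod m) j).val : ℝ) / (m : ℝ))) *
          Complex.exp (2 * Real.pi * I * (x j : ℝ) *
            (((c : Fin n → ZMod m) j).val : ℝ) / (m : ℝ)) from
    Finset.sum_congr rfl fun c _ => (Term_formula m n hn (c : Fin n → ZMod m) x t).symm]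
  rw [← Finset.mul_sum]
  ring

end UEq

end HeatCode

/-- Theorem 1.3 of the paper: for a linear code `C` over `ℤ/mℤ` of length
`n` (`m ≥ 2`), the heat equation on `ℤ^n` with initial condition the indicator function
of `ρ⁻¹(C)` has a unique bounded solution (differentiable in `t > 0` and continuous in
`t ≥ 0`), given explicitly by
`u(x,t) = e^{−t} (#C/mⁿ) Σ_{c∈C^⊥} ∏_j e^{(t/n)cos(2πc_j/m)} e^{2πi x_j c_j/m}`. -/
theorem heat_equation_linear_code (m n : ℕ) (hm : 2 ≤ m) (hn : 0 < n)
    (C : Submodule (ZMod m) (Fin n → ZMod m)) :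
    ∃ u : (Fin n → ℤ) → ℝ → ℝ,
      (IsBoundedSol n u ∧
        IsHeatSolution n (fun x => if (fun i => ((x i : ZMod m))) ∈ C then 1 else 0) u) ∧
      (∀ v : (Fin n → ℤ) → ℝ → ℝ,
        IsBoundedSol n v ∧
          IsHeatSolution n (fun x => if (fun i => ((x i : ZMod m))) ∈ C then 1 else 0) v →
        ∀ x t, 0 ≤ t → v x t = u x t) ∧
      (∀ (x : Fin n → ℤ) (t : ℝ), 0 ≤ t →
        (u x t : ℂ) = Complex.exp (-(t : ℂ)) * ((Nat.card C : ℂ) / (m : ℂ) ^ n) *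
          ∑' c : dualCode C,
            ∏ j, Complex.exp (((t / n : ℝ) : ℂ) *
                Real.cos (2 * Real.pi * (((c : Fin n → ZMod m) j).val : ℝ) / (m : ℝ))) *
              Complex.exp (2 * Real.pi * I * (x j : ℝ) *
                (((c : Fin n → ZMod m) j).val : ℝ) / (m : ℝ))) := by
  
  haveI : NeZero m := ⟨by omega⟩
  set u : (Fin n → ℤ) → ℝ → ℝ := fun x t => (HeatCode.U m n C x t).re with hu
  have hud : ∀ x t, HasDerivAt (u x)
      ((1 / (2 * (n : ℝ))) *
        ∑ j, (u (x + Pi.single j 1) t + u (x - Pi.single j 1) t - 2 * u x t)) t := by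
    intro x t
    have h := HeatCode.U_hasDerivAt m n C hn x t
    have h2 := Complex.reCLM.hasFDerivAt.comp_hasDerivAt t h
    refine h2.congr_deriv ?_
    simp only [hu, Complex.reCLM_apply, Complex.mul_re, Complex.ofReal_re, Complex.ofReal_im,
      Complex.re_sum, Complex.sub_re, Complex.add_re, Complex.re_ofNat, Complex.im_ofNat,
      zero_mul, sub_zero]
  have hubd : ∀ x t, 0 ≤ t → |u x t| ≤
      ‖(Nat.card C : ℂ) / (m : ℂ) ^ n‖ * Fintype.card (HeatCode.perp m n C) := by
    intro x t ht
    calc |u x t| ≤ ‖HeatCode.U m n C x t‖ := Complex.abs_re_le_norm _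
      _ ≤ _ := HeatCode.U_abs_le m n C hn x ht
  have hu0 : ∀ x, u x 0 = if (fun i => ((x i : ZMod m))) ∈ C then 1 else 0 := by
    intro x
    have h := HeatCode.U_zero m n C x
    simp only [hu, h]
    by_cases hx : (fun i => ((x i : ZMod m))) ∈ C <;> simp [hx]
  have hucont : ∀ x, Continuous (u x) := fun x =>
    continuous_iff_continuousAt.mpr fun t => (hud x t).continuousAt
  refine ⟨u, ⟨⟨_, hubd⟩, ⟨fun x => (hucont x).continuousOn,
      fun x t _ => (hud x t).hasDerivWithinAt, fun x t _ => hud x t, hu0⟩⟩, ?_, ?_⟩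
  · rintro v ⟨⟨Mv, hMv⟩, hvc, hvd, _, hv0⟩ x t ht
    have hzero : ∀ y, v y 0 - u y 0 = 0 := fun y => by rw [hv0 y, hu0 y, sub_self]
    have hw := HeatCode.uniqueness_aux n hn (fun y s => v y s - u y s)
      (Mv + ‖(Nat.card C : ℂ) / (m : ℂ) ^ n‖ * Fintype.card (HeatCode.perp m n C))
      (fun y s hs => by
        calc |v y s - u y s| ≤ |v y s| + |u y s| := abs_sub _ _
          _ ≤ _ := add_le_add (hMv y s hs) (hubd y s hs))
      (fun y => (hvc y).sub ((hucont y).continuousOn))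
      (fun y s hs => by
        have h3 := (hvd y s hs).sub ((hud y s).hasDerivWithinAt)
        have heq : (1 / (2 * (n:ℝ))) *
            ∑ j, (v (y + Pi.single j 1) s - u (y + Pi.single j 1) s
              + (v (y - Pi.single j 1) s - u (y - Pi.single j 1) s)
              - 2 * (v y s - u y s))
            = (1 / (2 * (n:ℝ)) *
                ∑ j, (v (y + Pi.single j 1) s + v (y - Pi.single j 1) s - 2 * v y s))
              - (1 / (2 * (n:ℝ)) *
                ∑ j, (u (y + Pi.single j 1) s + u (y - Pi.single j 1) s - 2 * u y s)) := by
          rw [← mul_sub, ← Finset.sum_sub_distrib]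
          congr 1
          exact Finset.sum_congr rfl fun j _ => by ring
        show HasDerivWithinAt (fun s => v y s - u y s)
          ((1 / (2 * (n:ℝ))) * ∑ j, (v (y + Pi.single j 1) s - u (y + Pi.single j 1) s
            + (v (y - Pi.single j 1) s - u (y - Pi.single j 1) s)
            - 2 * (v y s - u y s))) (Set.Ici 0) s
        rw [heq]
        exact h3)
      hzero
    exact sub_eq_zero.mp (hw x t ht)
  · intro x t ht
    simp only [hu]
    rw [HeatCode.U_re m n C x t]
    exact HeatCode.U_eq_formula m n hn C x t
end

section
/- Let m ≥ 2, let C be a linear code over ℤ/mℤ of length n, let ρ : ℤ^n → (ℤ/mℤ)^n be componentwise reduction mod m, and for y ∈ ℤ and t ∈ ℂ set A_y(t) = Σ_{γ ∈ y+mℤ} I_γ(t) = (1/m) Σ_{j=0}^{m−1} exp(t cos(2πj/m)) e^{2πi y j/m}. Then for every x = (x_1,…,x_n) ∈ ℤ^n and every t ∈ ℂ: Σ_{γ=(γ_j) ∈ x+ρ^{-1}(C)} ∏_{j=1}^n I_{γ_j}(t) = cwe_{ρ(x)+C}(A_0(t), A_1(t), …, A_{m−1}(t)). -/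
open scoped Real
open Complex

/-- The modified Bessel function of the first kind with integer order,
`I_x(t) = (1/π) ∫₀^π e^{t cos θ} cos(xθ) dθ`. -/
noncomputable def besselI (x : ℝ) (t : ℂ) : ℂ :=
  (Real.pi : ℂ)⁻¹ * ∫ θ in (0:ℝ)..Real.pi, Complex.exp (t * Real.cos θ) * (Real.cos (x * θ) : ℂ)

/-- `A_y(t) = Σ_{γ ∈ y+mℤ} I_γ(t)`. -/
noncomputable def Aseq (m : ℕ) (y : ℤ) (t : ℂ) : ℂ :=
  ∑' k : ℤ, besselI ((y : ℝ) + (m : ℝ) * (k : ℝ)) t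

/-- `n_ℓ(c)`: the number of components of `c` equal to `ℓ` mod `m`. -/
noncomputable def nComp {m n : ℕ} (c : Fin n → ZMod m) (ℓ : ℕ) : ℕ :=
  Nat.card {j : Fin n // c j = (ℓ : ZMod m)}

/-- The complete weight enumerator of a subset `B ⊆ (ℤ/mℤ)^n`,
`cwe_B(X_0,…,X_{m−1}) = Σ_{c∈B} ∏_{ℓ=0}^{m−1} X_ℓ^{n_ℓ(c)}`. -/
noncomputable def cwe {m n : ℕ} (B : Set (Fin n → ZMod m)) (X : ℕ → ℂ) : ℂ :=
  ∑' c : B, ∏ ℓ ∈ Finset.range m, X ℓ ^ nComp (c : Fin n → ZMod m) ℓ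

variable (t : ℂ)

lemma hasDerivAt_f (θ : ℝ) :
    HasDerivAt (fun θ : ℝ => Complex.exp (t * Real.cos θ))
      (-(t * Real.sin θ) * Complex.exp (t * Real.cos θ)) θ := by
  have h1 : HasDerivAt (fun θ : ℝ => ((Real.cos θ : ℝ) : ℂ)) (-Real.sin θ) θ := by
    simpa using (Real.hasDerivAt_cos θ).ofReal_comp
  have h2 := (h1.const_mul t).cexp
  convert h2 using 1
  ring

lemma hasDerivAt_f' (θ : ℝ) :
    HasDerivAt (fun θ : ℝ => -(t * Real.sin θ) * Complex.exp (t * Real.cos θ))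
      ((t^2 * Real.sin θ^2 - t * Real.cos θ) * Complex.exp (t * Real.cos θ)) θ := by
  have h1 : HasDerivAt (fun θ : ℝ => -(t * ((Real.sin θ : ℝ) : ℂ))) (-(t * Real.cos θ)) θ := by
    have := ((Real.hasDerivAt_sin θ).ofReal_comp.const_mul t).neg
    push_cast at this ⊢
    exact this
  have h2 := h1.mul (hasDerivAt_f t θ)
  refine h2.congr_deriv ?_
  push_cast
  ring

lemma hasDerivAt_sinx (r θ : ℝ) :
    HasDerivAt (fun θ : ℝ => ((Real.sin (r * θ) : ℝ) : ℂ)) ((r : ℂ) * Real.cos (r * θ)) θ := by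
  have h0 : HasDerivAt (fun θ : ℝ => r * θ) r θ := by
    simpa using (hasDerivAt_id θ).const_mul r
  have h1 : HasDerivAt (fun θ : ℝ => Real.sin (r * θ)) (Real.cos (r * θ) * r) θ :=
    (Real.hasDerivAt_sin (r * θ)).comp θ h0
  have := h1.ofReal_comp
  convert this using 1 <;> push_cast <;> ring

lemma cont_f : Continuous (fun θ : ℝ => Complex.exp (t * Real.cos θ)) := by fun_prop

lemma cont_f' : Continuous (fun θ : ℝ => -(t * Real.sin θ) * Complex.exp (t * Real.cos θ)) := by
  fun_prop

lemma cont_f'' : Continuous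
    (fun θ : ℝ => (t^2 * Real.sin θ^2 - t * Real.cos θ) * Complex.exp (t * Real.cos θ)) := by
  fun_prop

lemma norm_exp_tcos_le (θ : ℝ) : ‖Complex.exp (t * Real.cos θ)‖ ≤ Real.exp ‖t‖ := by
  rw [Complex.norm_exp]
  apply Real.exp_le_exp.2
  calc (t * (Real.cos θ : ℂ)).re ≤ ‖t * (Real.cos θ : ℂ)‖ := Complex.re_le_norm _
    _ = ‖t‖ * |Real.cos θ| := by rw [norm_mul, Complex.norm_real, Real.norm_eq_abs]
    _ ≤ ‖t‖ * 1 := by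
        exact mul_le_mul_of_nonneg_left (Real.abs_cos_le_one θ) (norm_nonneg t)
    _ = ‖t‖ := mul_one _

lemma besselI_norm_le (x : ℝ) : ‖besselI x t‖ ≤ Real.exp ‖t‖ := by
  rw [besselI, norm_mul]
  have h : ‖∫ θ in (0:ℝ)..Real.pi, Complex.exp (t * Real.cos θ) * (Real.cos (x * θ) : ℂ)‖
      ≤ Real.exp ‖t‖ * |Real.pi - 0| := by
    apply intervalIntegral.norm_integral_le_of_norm_le_const
    intro θ _
    rw [norm_mul]
    calc ‖Complex.exp (t * Real.cos θ)‖ * ‖(Real.cos (x * θ) : ℂ)‖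
        ≤ Real.exp ‖t‖ * 1 := by
          apply mul_le_mul (norm_exp_tcos_le t θ) _ (norm_nonneg _) (Real.exp_pos _).le
          rw [Complex.norm_real, Real.norm_eq_abs]; exact Real.abs_cos_le_one _
      _ = Real.exp ‖t‖ := mul_one _
  calc ‖(Real.pi : ℂ)⁻¹‖ * ‖_‖ ≤ ‖(Real.pi : ℂ)⁻¹‖ * (Real.exp ‖t‖ * |Real.pi - 0|) :=
        mul_le_mul_of_nonneg_left h (norm_nonneg _)
    _ = Real.exp ‖t‖ := by
        rw [norm_inv, Complex.norm_real, Real.norm_eq_abs, abs_of_pos Real.pi_pos, sub_zero,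
          abs_of_pos Real.pi_pos]
        field_simp

lemma hasDerivAt_negcosx (r θ : ℝ) :
    HasDerivAt (fun θ : ℝ => -((Real.cos (r * θ) : ℝ) : ℂ)) ((r : ℂ) * Real.sin (r * θ)) θ := by
  have h0 : HasDerivAt (fun θ : ℝ => r * θ) r θ := by
    simpa using (hasDerivAt_id θ).const_mul r
  have h1 : HasDerivAt (fun θ : ℝ => Real.cos (r * θ)) (-Real.sin (r * θ) * r) θ :=
    (Real.hasDerivAt_cos (r * θ)).comp θ h0
  have := h1.ofReal_comp.neg
  refine this.congr_deriv ?_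
  push_cast
  ring

lemma f''_cos_bound (r θ : ℝ) :
    ‖(t^2 * Real.sin θ^2 - t * Real.cos θ) * Complex.exp (t * Real.cos θ) * (Real.cos (r * θ) : ℂ)‖
      ≤ (‖t‖^2 + ‖t‖) * Real.exp ‖t‖ := by
  rw [norm_mul, norm_mul]
  have h1 : ‖t^2 * (Real.sin θ : ℂ)^2 - t * Real.cos θ‖ ≤ ‖t‖^2 + ‖t‖ := by
    calc ‖t^2 * (Real.sin θ : ℂ)^2 - t * (Real.cos θ : ℂ)‖
        ≤ ‖t^2 * (Real.sin θ : ℂ)^2‖ + ‖t * (Real.cos θ : ℂ)‖ := norm_sub_le _ _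
      _ ≤ ‖t‖^2 + ‖t‖ := by
          gcongr
          · rw [norm_mul, norm_pow, norm_pow, Complex.norm_real, Real.norm_eq_abs]
            calc ‖t‖^2 * |Real.sin θ|^2 ≤ ‖t‖^2 * 1^2 := by
                  gcongr; exact Real.abs_sin_le_one θ
              _ = ‖t‖^2 := by ring
          · rw [norm_mul, Complex.norm_real, Real.norm_eq_abs]
            calc ‖t‖ * |Real.cos θ| ≤ ‖t‖ * 1 := by gcongr; exact Real.abs_cos_le_one θ
              _ = ‖t‖ := mul_one _
  have h2 : ‖(Real.cos (r * θ) : ℂ)‖ ≤ 1 := by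
    rw [Complex.norm_real, Real.norm_eq_abs]; exact Real.abs_cos_le_one _
  have h3 := norm_exp_tcos_le t θ
  calc ‖t^2 * (Real.sin θ : ℂ)^2 - t * (Real.cos θ : ℂ)‖ * ‖Complex.exp (t * Real.cos θ)‖
        * ‖(Real.cos (r * θ) : ℂ)‖
      ≤ ((‖t‖^2 + ‖t‖) * Real.exp ‖t‖) * 1 := by
        apply mul_le_mul _ h2 (norm_nonneg _) (by positivity)
        exact mul_le_mul h1 h3 (norm_nonneg _) (by positivity)
    _ = (‖t‖^2 + ‖t‖) * Real.exp ‖t‖ := mul_one _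

lemma besselI_decay (x : ℤ) (hx : x ≠ 0) :
    ‖besselI (x:ℝ) t‖ ≤ (‖t‖^2 + ‖t‖) * Real.exp ‖t‖ / (x:ℝ)^2 := by
  set r : ℝ := (x : ℝ) with hr_def
  have hr : r ≠ 0 := Int.cast_ne_zero.2 hx
  set f : ℝ → ℂ := fun θ => Complex.exp (t * Real.cos θ) with hf_def
  set f' : ℝ → ℂ := fun θ => -(t * Real.sin θ) * Complex.exp (t * Real.cos θ) with hf'_def
  set f'' : ℝ → ℂ := fun θ => (t^2 * Real.sin θ^2 - t * Real.cos θ) * Complex.exp (t * Real.cos θ)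
    with hf''_def
  have hA : ∫ θ in (0:ℝ)..Real.pi, f θ * ((r : ℂ) * Real.cos (r * θ))
      = f Real.pi * (Real.sin (r * Real.pi) : ℂ) - f 0 * (Real.sin (r * 0) : ℂ)
        - ∫ θ in (0:ℝ)..Real.pi, f' θ * (Real.sin (r * θ) : ℂ) := by
    apply intervalIntegral.integral_mul_deriv_eq_deriv_mul
      (u := f) (u' := f') (v := fun θ => ((Real.sin (r * θ) : ℝ) : ℂ))
      (v' := fun θ => (r : ℂ) * Real.cos (r * θ))
    · exact fun θ _ => hasDerivAt_f t θ
    · exact fun θ _ => hasDerivAt_sinx r θ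
    · exact (cont_f' t).intervalIntegrable _ _
    · exact (by fun_prop : Continuous fun θ : ℝ => (r : ℂ) * Real.cos (r * θ)).intervalIntegrable _ _
  have hB : ∫ θ in (0:ℝ)..Real.pi, f' θ * ((r : ℂ) * Real.sin (r * θ))
      = f' Real.pi * (-(Real.cos (r * Real.pi) : ℂ)) - f' 0 * (-(Real.cos (r * 0) : ℂ))
        - ∫ θ in (0:ℝ)..Real.pi, f'' θ * (-(Real.cos (r * θ) : ℂ)) := by
    apply intervalIntegral.integral_mul_deriv_eq_deriv_mul
      (u := f') (u' := f'') (v := fun θ => -((Real.cos (r * θ) : ℝ) : ℂ))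
      (v' := fun θ => (r : ℂ) * Real.sin (r * θ))
    · exact fun θ _ => hasDerivAt_f' t θ
    · exact fun θ _ => hasDerivAt_negcosx r θ
    · exact (cont_f'' t).intervalIntegrable _ _
    · exact (by fun_prop : Continuous fun θ : ℝ => (r : ℂ) * Real.sin (r * θ)).intervalIntegrable _ _
  have hsinpi : Real.sin (r * Real.pi) = 0 := by
    rw [hr_def]; exact_mod_cast Real.sin_int_mul_pi x
  have hfpi : f' Real.pi = 0 := by simp [hf'_def, Real.sin_pi]
  have hf0 : f' 0 = 0 := by simp [hf'_def]
  rw [hsinpi] at hA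
  simp only [mul_zero, Real.sin_zero, Complex.ofReal_zero, zero_sub, sub_zero] at hA
  rw [hfpi, hf0] at hB
  simp only [zero_mul, sub_zero, zero_sub] at hB
  -- extract constants
  have hA' : (r : ℂ) * ∫ θ in (0:ℝ)..Real.pi, f θ * (Real.cos (r * θ) : ℂ)
      = - ∫ θ in (0:ℝ)..Real.pi, f' θ * (Real.sin (r * θ) : ℂ) := by
    rw [← hA, ← intervalIntegral.integral_const_mul]
    congr 1; funext θ; ring
  have hB' : (r : ℂ) * ∫ θ in (0:ℝ)..Real.pi, f' θ * (Real.sin (r * θ) : ℂ)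
      = ∫ θ in (0:ℝ)..Real.pi, f'' θ * (Real.cos (r * θ) : ℂ) := by
    have e1 : ∫ θ in (0:ℝ)..Real.pi, f' θ * ((r : ℂ) * Real.sin (r * θ))
        = (r : ℂ) * ∫ θ in (0:ℝ)..Real.pi, f' θ * (Real.sin (r * θ) : ℂ) := by
      rw [← intervalIntegral.integral_const_mul]; congr 1; funext θ; ring
    rw [← e1, hB, ← intervalIntegral.integral_neg]
    congr 1; funext θ; ring
  have hkey : ((r : ℂ)^2) * ∫ θ in (0:ℝ)..Real.pi, f θ * (Real.cos (r * θ) : ℂ)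
      = - ∫ θ in (0:ℝ)..Real.pi, f'' θ * (Real.cos (r * θ) : ℂ) := by
    rw [pow_two, mul_assoc, hA', mul_neg, hB']
  have hf''bound : ‖∫ θ in (0:ℝ)..Real.pi, f'' θ * (Real.cos (r * θ) : ℂ)‖
      ≤ (‖t‖^2 + ‖t‖) * Real.exp ‖t‖ * |Real.pi - 0| := by
    apply intervalIntegral.norm_integral_le_of_norm_le_const
    intro θ _
    exact f''_cos_bound t r θ
  have hInorm : ‖∫ θ in (0:ℝ)..Real.pi, f θ * (Real.cos (r * θ) : ℂ)‖
      ≤ (‖t‖^2 + ‖t‖) * Real.exp ‖t‖ * Real.pi / r^2 := by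
    have h1 : ‖((r : ℂ)^2) * ∫ θ in (0:ℝ)..Real.pi, f θ * (Real.cos (r * θ) : ℂ)‖
        ≤ (‖t‖^2 + ‖t‖) * Real.exp ‖t‖ * Real.pi := by
      rw [hkey, norm_neg]
      calc ‖∫ θ in (0:ℝ)..Real.pi, f'' θ * (Real.cos (r * θ) : ℂ)‖
          ≤ (‖t‖^2 + ‖t‖) * Real.exp ‖t‖ * |Real.pi - 0| := hf''bound
        _ = (‖t‖^2 + ‖t‖) * Real.exp ‖t‖ * Real.pi := by
            rw [sub_zero, abs_of_pos Real.pi_pos]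
    rw [norm_mul, norm_pow, Complex.norm_real, Real.norm_eq_abs] at h1
    rw [le_div_iff₀ (by positivity : (0:ℝ) < r^2)]
    calc ‖∫ θ in (0:ℝ)..Real.pi, f θ * (Real.cos (r * θ) : ℂ)‖ * r^2
        = |r|^2 * ‖∫ θ in (0:ℝ)..Real.pi, f θ * (Real.cos (r * θ) : ℂ)‖ := by
          rw [_root_.sq_abs]; ring
      _ ≤ (‖t‖^2 + ‖t‖) * Real.exp ‖t‖ * Real.pi := h1
  rw [besselI, norm_mul, norm_inv, Complex.norm_real, Real.norm_eq_abs,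
    abs_of_pos Real.pi_pos]
  calc Real.pi⁻¹ * ‖∫ θ in (0:ℝ)..Real.pi, f θ * (Real.cos (r * θ) : ℂ)‖
      ≤ Real.pi⁻¹ * ((‖t‖^2 + ‖t‖) * Real.exp ‖t‖ * Real.pi / r^2) := by
        exact mul_le_mul_of_nonneg_left hInorm (inv_nonneg.2 Real.pi_pos.le)
    _ = (‖t‖^2 + ‖t‖) * Real.exp ‖t‖ / r^2 := by
        field_simp

lemma summable_norm_besselI : Summable (fun γ : ℤ => ‖besselI (γ:ℝ) t‖) := by
  set Cst : ℝ := (‖t‖^2 + ‖t‖) * Real.exp ‖t‖ with hCst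
  have hb : ∀ γ : ℤ, ‖besselI (γ:ℝ) t‖
      ≤ Cst * (1 / (γ:ℝ)^2) + (if γ = 0 then Real.exp ‖t‖ else 0) := by
    intro γ
    by_cases h : γ = 0
    · subst h
      simp only [if_pos rfl, Int.cast_zero]
      norm_num
      exact besselI_norm_le t 0
    · rw [if_neg h, add_zero, mul_one_div]
      exact besselI_decay t γ h
  apply Summable.of_nonneg_of_le (fun γ => norm_nonneg _) hb
  apply Summable.add
  · exact (Real.summable_one_div_int_pow.mpr (by norm_num)).mul_left Cst
  · apply summable_of_ne_finset_zero (s := {(0:ℤ)})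
    intro γ hγ
    rw [if_neg (by simpa using hγ)]

lemma summable_norm_besselI_shift (m : ℕ) (hm : m ≠ 0) (a : ℤ) :
    Summable (fun k : ℤ => ‖besselI ((a + (m:ℤ) * k : ℤ) : ℝ) t‖) := by
  have hinj : Function.Injective (fun k : ℤ => a + (m:ℤ) * k) := by
    intro k₁ k₂ h
    simp only at h
    have hm' : (m:ℤ) ≠ 0 := by exact_mod_cast hm
    exact mul_left_cancel₀ hm' (by linarith)
  exact (summable_norm_besselI t).comp_injective hinj

set_option maxHeartbeats 1000000 in
lemma tsum_pi_prod (n : ℕ) (f : Fin n → ℤ → ℂ) (hf : ∀ j, Summable fun k => ‖f j k‖) :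
    Summable (fun k : (Fin n → ℤ) => ‖∏ j, f j (k j)‖) ∧
    (∑' k : (Fin n → ℤ), ∏ j, f j (k j)) = ∏ j, ∑' k : ℤ, f j k := by
  induction n with
  | zero =>
      constructor
      · exact .of_finite
      · simp
  | succ n ih =>
      obtain ⟨ihS, ihT⟩ := ih (fun j => f j.succ) (fun j => hf j.succ)
      have h0 := hf 0
      set e := (Fin.consEquiv (fun _ => ℤ)).symm with he
      have hcomp : ∀ k : Fin (n+1) → ℤ,
          (∏ j, f j (k j)) = f 0 ((e k).1) * ∏ j, f j.succ ((e k).2 j) := by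
        intro k
        rw [Fin.prod_univ_succ]
        rfl
      have hS : Summable (fun p : ℤ × (Fin n → ℤ) =>
          ‖f 0 p.1 * ∏ j, f j.succ (p.2 j)‖) := by
        apply Summable.mul_norm h0 ihS
      constructor
      · apply Summable.congr (hS.comp_injective e.injective)
        intro k
        rw [Function.comp_apply, hcomp k]
      · have step1 : (∑' k : Fin (n+1) → ℤ, ∏ j, f j (k j))
            = ∑' p : ℤ × (Fin n → ℤ), f 0 p.1 * ∏ j, f j.succ (p.2 j) := by
          rw [← e.tsum_eq (fun p : ℤ × (Fin n → ℤ) => f 0 p.1 * ∏ j, f j.succ (p.2 j))]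
          exact tsum_congr hcomp
        rw [step1, ← tsum_mul_tsum_of_summable_norm h0 ihS, ihT, Fin.prod_univ_succ]

-- grouping lemma
lemma prod_Aseq_group (m n : ℕ) [NeZero m] (c : Fin n → ZMod m) (X : ℕ → ℂ) :
    ∏ j, X (c j).val = ∏ ℓ ∈ Finset.range m, X ℓ ^ nComp c ℓ := by
  classical
  rw [← Finset.prod_fiberwise_of_maps_to (g := fun j => (c j).val) (t := Finset.range m)
    (fun j _ => Finset.mem_range.2 (ZMod.val_lt (c j))) (fun j => X (c j).val)]
  apply Finset.prod_congr rfl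
  intro ℓ hℓ
  have hcongr : ∀ j ∈ Finset.univ.filter (fun j => (c j).val = ℓ), X (c j).val = X ℓ := by
    intro j hj
    rw [(Finset.mem_filter.1 hj).2]
  rw [Finset.prod_congr rfl hcongr, Finset.prod_const]
  congr 1
  rw [nComp, Nat.card_eq_fintype_card, Fintype.card_subtype]
  have hiff : ∀ j : Fin n, (c j).val = ℓ ↔ c j = (ℓ : ZMod m) := by
    intro j
    constructor
    · intro h; rw [← h, ZMod.natCast_zmod_val]
    · intro h; rw [h, ZMod.val_natCast_of_lt (Finset.mem_range.1 hℓ)]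
  congr 1
  exact Finset.filter_congr (fun j _ => hiff j)

noncomputable def cosetEquiv (m n : ℕ) [NeZero m] (C : Submodule (ZMod m) (Fin n → ZMod m))
    (x : Fin n → ℤ) :
    (((fun c => (fun i => ((x i : ZMod m))) + c) '' (C : Set (Fin n → ZMod m))) ×
      (Fin n → ℤ)) ≃ {w : Fin n → ℤ // (fun i => ((w i : ZMod m))) ∈ C} where
  toFun p := ⟨fun j => ((p.1.1 j).val : ℤ) + m * p.2 j - x j, by
    obtain ⟨c₀, hc₀, hcc⟩ := p.1.2
    have key : (fun i => ((((p.1.1 i).val : ℤ) + m * p.2 i - x i : ℤ) : ZMod m)) = c₀ := by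
      funext i
      have hci : p.1.1 i = (x i : ZMod m) + c₀ i := by rw [← hcc]; rfl
      push_cast [ZMod.natCast_zmod_val, ZMod.natCast_self]
      rw [hci]; ring
    exact key ▸ hc₀⟩
  invFun w := ⟨⟨fun i => ((x i + w.1 i : ℤ) : ZMod m),
      ⟨fun i => ((w.1 i : ℤ) : ZMod m), w.2, by funext i; push_cast; rfl⟩⟩,
    fun j => (x j + w.1 j - ((((x j + w.1 j : ℤ) : ZMod m)).val : ℤ)) / m⟩
  left_inv p := by
    obtain ⟨⟨c, hc⟩, k⟩ := p
    have hm' : (m : ℤ) ≠ 0 := by exact_mod_cast (NeZero.ne m)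
    have hc' : ∀ j, ((x j + (((c j).val : ℤ) + m * k j - x j) : ℤ) : ZMod m) = c j := by
      intro j
      push_cast [ZMod.natCast_zmod_val, ZMod.natCast_self]
      ring
    refine Prod.ext ?_ ?_
    · apply Subtype.ext
      funext i
      exact hc' i
    · funext j
      show (x j + (((c j).val : ℤ) + m * k j - x j)
          - ((((x j + (((c j).val : ℤ) + m * k j - x j) : ℤ) : ZMod m)).val : ℤ)) / m = k j
      rw [hc' j]
      have : x j + (((c j).val : ℤ) + m * k j - x j) - ((c j).val : ℤ) = m * k j := by ring
      rw [this, Int.mul_ediv_cancel_left _ hm']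
  right_inv w := by
    apply Subtype.ext
    funext j
    have hdvd : (m : ℤ) ∣ (x j + w.1 j - ((((x j + w.1 j : ℤ) : ZMod m)).val : ℤ)) := by
      apply (ZMod.intCast_zmod_eq_zero_iff_dvd _ m).1
      push_cast [ZMod.natCast_zmod_val]
      ring
    show ((((x j + w.1 j : ℤ) : ZMod m)).val : ℤ)
        + m * ((x j + w.1 j - ((((x j + w.1 j : ℤ) : ZMod m)).val : ℤ)) / m) - x j = w.1 j
    rw [Int.mul_ediv_cancel' hdvd]
    ring

/-- Lemma 4.2 of the paper: for a linear code `C` over `ℤ/mℤ` of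
length `n`, `x ∈ ℤ^n` and `t ∈ ℂ`:
`Σ_{γ ∈ x+ρ⁻¹(C)} ∏_j I_{γ_j}(t) = cwe_{ρ(x)+C}(A_0(t),…,A_{m−1}(t))`. -/
theorem besselI_coset_sum_eq_cwe (m n : ℕ) (hm : 2 ≤ m)
    (C : Submodule (ZMod m) (Fin n → ZMod m)) (x : Fin n → ℤ) (t : ℂ) :
    ∑' w : {w : Fin n → ℤ // (fun i => ((w i : ZMod m))) ∈ C},
      ∏ j, besselI (((x j + (w : Fin n → ℤ) j : ℤ) : ℝ)) t =
    cwe ((fun c => (fun i => ((x i : ZMod m))) + c) '' (C : Set (Fin n → ZMod m)))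
      (fun ℓ => Aseq m (ℓ : ℤ) t) := by
  haveI : NeZero m := ⟨by omega⟩
  classical
  have hm0 : m ≠ 0 := by omega
  set B : Set (Fin n → ZMod m) :=
    (fun c => (fun i => ((x i : ZMod m))) + c) '' (C : Set (Fin n → ZMod m)) with hB
  set E := cosetEquiv m n C x with hE
  -- fiberwise summability and value
  have hfib : ∀ c : Fin n → ZMod m,
      Summable (fun k : Fin n → ℤ =>
        ‖∏ j, besselI ((((c j).val : ℤ) : ℝ) + (m : ℝ) * (k j : ℝ)) t‖) ∧
      (∑' k : Fin n → ℤ, ∏ j, besselI ((((c j).val : ℤ) : ℝ) + (m : ℝ) * (k j : ℝ)) t)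
        = ∏ j, Aseq m ((c j).val : ℤ) t := by
    intro c
    exact tsum_pi_prod n
      (fun j k => besselI ((((c j).val : ℤ) : ℝ) + (m : ℝ) * (k : ℝ)) t)
      (fun j => by
        apply Summable.congr (summable_norm_besselI_shift t m hm0 ((c j).val : ℤ))
        intro k
        congr 2
        push_cast
        ring)
  -- full summability on the product
  have hF : Summable (fun p : ↥B × (Fin n → ℤ) =>
      ∏ j, besselI ((((p.1.1 j).val : ℤ) : ℝ) + (m : ℝ) * (p.2 j : ℝ)) t) := by
    apply Summable.of_norm
    refine (summable_prod_of_nonneg (fun p => norm_nonneg _)).2 ⟨fun c => (hfib c.1).1, ?_⟩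
    exact Summable.of_finite
  calc ∑' w : {w : Fin n → ℤ // (fun i => ((w i : ZMod m))) ∈ C},
        ∏ j, besselI (((x j + (w : Fin n → ℤ) j : ℤ) : ℝ)) t
      = ∑' p : ↥B × (Fin n → ℤ),
          ∏ j, besselI (((x j + ((E p : {w : Fin n → ℤ // _}) : Fin n → ℤ) j : ℤ) : ℝ)) t :=
        (E.tsum_eq _).symm
    _ = ∑' p : ↥B × (Fin n → ℤ),
          ∏ j, besselI ((((p.1.1 j).val : ℤ) : ℝ) + (m : ℝ) * (p.2 j : ℝ)) t := by
        refine tsum_congr (fun p => Finset.prod_congr rfl (fun j _ => ?_))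
        have h1 : (x j + ((E p : {w : Fin n → ℤ // _}) : Fin n → ℤ) j : ℤ)
            = ((p.1.1 j).val : ℤ) + m * p.2 j := by
          show x j + (((p.1.1 j).val : ℤ) + m * p.2 j - x j) = _
          ring
        rw [h1]
        congr 1
        push_cast
        ring
    _ = ∑' c : ↥B, ∑' k : Fin n → ℤ,
          ∏ j, besselI ((((c.1 j).val : ℤ) : ℝ) + (m : ℝ) * (k j : ℝ)) t := hF.tsum_prod
    _ = ∑' c : ↥B, ∏ j, Aseq m ((c.1 j).val : ℤ) t := tsum_congr (fun c => (hfib c.1).2)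
    _ = ∑' c : ↥B, ∏ ℓ ∈ Finset.range m, (Aseq m (ℓ : ℤ) t) ^ nComp (c : Fin n → ZMod m) ℓ :=
        tsum_congr (fun c => prod_Aseq_group m n c.1 (fun ℓ => Aseq m (ℓ : ℤ) t))
    _ = cwe B (fun ℓ => Aseq m (ℓ : ℤ) t) := rfl
end
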